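/- Let R be a commutative ring, p a prime number, k ≥ 0 an integer, and z ∈ R an element which is nilpotent and satisfies p^k · z = 0. Then there exists n ≥ 0 such that (x + z)^{p^n} = x^{p^n} for every x ∈ R. -/

import Mathlib

/-- If `z` is a nilpotent element of a commutative ring killed by `p ^ k` for a prime `p`,
then `(x + z) ^ (p ^ n) = x ^ (p ^ n)` for all `x`, for all sufficiently large `n`. -/
theorem pow_add_nilpotent_p_torsion {R : Type*} [CommRing R] (p : ℕ) (hp : p.Prime) (k : ℕ)
    (z : R) (hz : IsNilpotent z) (hk : (p : R) ^ k * z = 0) :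
    ∃ n : ℕ, ∀ x : R, (x + z) ^ p ^ n = x ^ p ^ n := by
  obtain ⟨m₀, hm₀⟩ := hz
  -- replace m₀ by m := m₀ + 1 ≥ 1
  set m := m₀ + 1 with hm_def
  have hm : z ^ m = 0 := by rw [hm_def, pow_succ', hm₀, mul_zero]
  refine ⟨k + m, fun x => ?_⟩
  set N := p ^ (k + m) with hN
  rw [add_pow]
  have key : ∀ i ∈ Finset.range (N + 1), i ≠ N → x ^ i * z ^ (N - i) * (N.choose i : R) = 0 := by
    intro i hi hiN
    have hiN' : i < N := lt_of_le_of_ne (Nat.lt_succ_iff.mp (Finset.mem_range.mp hi)) hiN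
    set j := N - i with hj
    have hj1 : 1 ≤ j := Nat.le_sub_of_add_le (by omega)
    by_cases hjm : m ≤ j
    · -- z ^ j = 0
      have : z ^ j = 0 := by
        calc z ^ j = z ^ m * z ^ (j - m) := by rw [← pow_add, Nat.add_sub_cancel' hjm]
        _ = 0 := by rw [hm, zero_mul]
      rw [this, mul_zero, zero_mul]
    · push_neg at hjm
      -- p ^ k divides choose N i
      have hjN : j ≤ N := Nat.sub_le _ _
      have hchoose : N.choose i = N.choose j := by
        rw [hj, Nat.choose_symm (le_of_lt hiN')]
      have hj0 : j ≠ 0 := by omega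
      have hmult : multiplicity p j < m := by
        have h1 : FiniteMultiplicity p j := Nat.finiteMultiplicity_iff.2 ⟨hp.ne_one, Nat.pos_of_ne_zero hj0⟩
        have h2 : p ^ multiplicity p j ∣ j := pow_multiplicity_dvd p j
        have h3 : p ^ multiplicity p j ≤ j := Nat.le_of_dvd (Nat.pos_of_ne_zero hj0) h2
        by_contra hcon
        push_neg at hcon
        have : p ^ m ≤ p ^ multiplicity p j := Nat.pow_le_pow_right hp.pos hcon
        have hmm : m < p ^ m := Nat.lt_pow_self (n := m) hp.one_lt
        omega
      have hdvd : p ^ k ∣ N.choose j := by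
        apply pow_dvd_of_le_emultiplicity
        rw [hN, hp.emultiplicity_choose_prime_pow (hN ▸ hjN) hj0]
        exact_mod_cast Nat.le_sub_of_add_le (by omega)
      obtain ⟨c, hc⟩ := hdvd
      rw [hchoose, hc]
      push_cast
      have hz' : z ^ j = z * z ^ (j - 1) := by
        rw [← pow_succ']; congr 1; omega
      rw [hz']
      calc x ^ i * (z * z ^ (j - 1)) * ((p : R) ^ k * (c : R))
          = ((p : R) ^ k * z) * (x ^ i * z ^ (j - 1) * (c : R)) := by ring
        _ = 0 := by rw [hk, zero_mul]
  rw [Finset.sum_eq_single_of_mem N (Finset.mem_range.2 (Nat.lt_succ_self N)) key]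
  simp
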